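/- arXiv:math/0303353 — 2 statements merged into one kernel-verified Lean document; each statement's English description precedes it below -/
import Mathlib

section
/- Define X_1(n,m) = Σ_{(m_0,…,m_n)} (−1)^{ε(m_*)} · (1 + Σ_{i=1}^{n} (−1)^{m_0+⋯+m_{i−1}}), the sum over all (n+1)-tuples of nonnegative integers with m_0+⋯+m_n = m. Then for all integers j ≥ 1 and k ≥ 1: X_1(2j, 2k) = (2j+1)·C(j+k, j); X_1(2j, 2k−1) = C(j+k−1, j); X_1(2j−1, 2k) = (2j+2k)·C(j+k−1, k); and X_1(2j−1, 2k−1) = 2k·C(j+k−1, k). Here C(a,b) denotes the binomial coefficient. -/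
open Finset

/-- `eps n v = v (n-1) + v (n-3) + ⋯`: the exponent of the sign of the
shuffle encoded by the tuple `v = (m_0, …, m_n)`. -/
def eps (n : ℕ) (v : Fin (n+1) → ℕ) : ℕ :=
  ∑ t ∈ Finset.range ((n+1)/2), v ⟨n - 1 - 2*t, by omega⟩

/-- `psumV n v i = v 0 + v 1 + ⋯ + v (i-1)`. -/
def psumV (n : ℕ) (v : Fin (n+1) → ℕ) (i : ℕ) : ℕ :=
  ∑ t : Fin (n+1), if (t : ℕ) < i then v t else 0

/-- `X₁(n,m)`: the sum over all shuffles of `a_0 a_1 ⋯ a_n` with `b_1 ⋯ b_m`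
keeping `a_0` first (encoded by `(n+1)`-tuples summing to `m`) of the
oriented sign sum `sgn σ · Σ_{i=0}^n sgn_σ(a_i, b_1, …, b_m)`. -/
def X1 (n m : ℕ) : ℤ :=
  ∑ v ∈ Finset.Nat.antidiagonalTuple (n+1) m,
    (-1 : ℤ) ^ eps n v * (1 + ∑ i ∈ Finset.Icc 1 n, (-1 : ℤ) ^ psumV n v i)

def S : ℕ → ℕ → ℕ → ℤ
  | a+1, b, m => ∑ y ∈ Finset.range (m+1), S a b y
  | 0, b+1, m => ∑ y ∈ Finset.range (m+1), (-1)^(m-y) * S 0 b y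
  | 0, 0, 0 => 1
  | 0, 0, _+1 => 0
  termination_by a b _ => (a, b)

lemma S_left (a b m : ℕ) : S (a+1) b m = ∑ y ∈ Finset.range (m+1), S a b y := by
  rw [S]

lemma S_zero_zero (m : ℕ) : S 0 0 m = if m = 0 then 1 else 0 := by
  cases m <;> simp [S]

lemma swap_id (g : ℕ → ℤ) (N : ℕ) :
    ∑ y ∈ Finset.range (N+1), ∑ z ∈ Finset.range (y+1), (-1:ℤ)^(y-z) * g z
      = ∑ y ∈ Finset.range (N+1), (-1:ℤ)^(N-y) * ∑ z ∈ Finset.range (y+1), g z := by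
  have h2 : ∀ y, (-1:ℤ)^(N-y) * ∑ z ∈ Finset.range (y+1), g z
      = ∑ z ∈ Finset.range (y+1), (-1:ℤ)^(N-y) * g z := fun y => Finset.mul_sum _ _ _
  simp_rw [h2]
  rw [← Finset.sum_sigma (Finset.range (N+1)) (fun y => Finset.range (y+1))
    (fun p => (-1:ℤ)^(p.1-p.2) * g p.2)]
  rw [← Finset.sum_sigma (Finset.range (N+1)) (fun y => Finset.range (y+1))
    (fun p => (-1:ℤ)^(N-p.1) * g p.2)]
  refine Finset.sum_nbij' (fun p => ⟨N - p.1 + p.2, p.2⟩) (fun p => ⟨N - p.1 + p.2, p.2⟩) ?_ ?_ ?_ ?_ ?_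
  · rintro ⟨y, z⟩ h
    simp only [Finset.mem_sigma, Finset.mem_range] at h ⊢
    omega
  · rintro ⟨y, z⟩ h
    simp only [Finset.mem_sigma, Finset.mem_range] at h ⊢
    omega
  · rintro ⟨y, z⟩ h
    simp only [Finset.mem_sigma, Finset.mem_range] at h
    dsimp only
    rw [show N - (N - y + z) + z = y from by omega]
  · rintro ⟨y, z⟩ h
    simp only [Finset.mem_sigma, Finset.mem_range] at h
    dsimp only
    rw [show N - (N - y + z) + z = y from by omega]
  · rintro ⟨y, z⟩ h
    simp only [Finset.mem_sigma, Finset.mem_range] at h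
    have : N - (N - y + z) = y - z := by omega
    rw [this]

lemma S_right (a b m : ℕ) :
    S a (b+1) m = ∑ y ∈ Finset.range (m+1), (-1:ℤ)^(m-y) * S a b y := by
  induction a generalizing m with
  | zero => rw [S]
  | succ a ih =>
    rw [S_left]
    have : ∀ y ∈ Finset.range (m+1), S a (b+1) y
        = ∑ z ∈ Finset.range (y+1), (-1:ℤ)^(y-z) * S a b z := fun y _ => ih y
    rw [Finset.sum_congr rfl this, swap_id (S a b) m]
    exact Finset.sum_congr rfl fun y _ => by rw [S_left]

lemma S_zero (a b : ℕ) : S a b 0 = 1 := by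
  induction a with
  | zero =>
    induction b with
    | zero => simp [S]
    | succ b ih => rw [S_right]; simp [ih]
  | succ a ih => rw [S_left]; simp [ih]

lemma S_left_succ (a b m : ℕ) : S (a+1) b (m+1) = S (a+1) b m + S a b (m+1) := by
  rw [S_left, S_left, Finset.sum_range_succ]

lemma S_right_succ (a b m : ℕ) : S a (b+1) (m+1) = S a b (m+1) - S a (b+1) m := by
  rw [S_right, Finset.sum_range_succ, S_right]
  have : ∀ y ∈ Finset.range (m+1), (-1:ℤ)^(m+1-y) * S a b y = -((-1:ℤ)^(m-y) * S a b y) := by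
    intro y hy
    simp only [Finset.mem_range] at hy
    have : m + 1 - y = (m - y) + 1 := by omega
    rw [this, pow_succ]
    ring
  rw [Finset.sum_congr rfl this, Finset.sum_neg_distrib]
  simp
  ring

lemma pascal_symm (j t : ℕ) : (j+t).choose t = (j+t).choose j := by
  have := Nat.choose_symm (n := j+t) (k := j) (by omega)
  simpa [Nat.add_sub_cancel_left] using this

lemma pascal (j t : ℕ) : (j+t+1).choose (j+1) = (j+t).choose j + (j+t).choose (j+1) := by
  rw [Nat.choose_succ_succ]

lemma S_closed (j : ℕ) :
    (∀ m, S (j+1) j m = ((j + m/2).choose j : ℤ)) ∧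
    (∀ m, S (j+1) (j+1) m = if m % 2 = 0 then ((j + m/2).choose (m/2) : ℤ) else 0) := by
  induction j with
  | zero =>
    have hA : ∀ m, S 1 0 m = ((0 + m/2).choose 0 : ℤ) := by
      intro m
      induction m with
      | zero => simp [S_zero]
      | succ m ih => rw [S_left_succ, S_zero_zero, ih]; simp
    refine ⟨hA, ?_⟩
    intro m
    induction m with
    | zero => simp [S_zero]
    | succ m ih =>
      rw [S_right_succ, ih, hA (m+1)]
      rcases Nat.even_or_odd m with h | h
      · have h0 : m % 2 = 0 := Nat.even_iff.1 h
        have h1 : ¬ ((m+1) % 2 = 0) := by omega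
        have h2 : (m+1)/2 = m/2 := by omega
        simp [h0, h1, h2]
      · have h0 : ¬ (m % 2 = 0) := by rw [Nat.odd_iff] at h; omega
        have h1 : (m+1) % 2 = 0 := by rw [Nat.odd_iff] at h; omega
        simp [h0, h1]
  | succ j ih =>
    obtain ⟨ihA, ihD⟩ := ih
    have hA : ∀ m, S (j+2) (j+1) m = ((j+1 + m/2).choose (j+1) : ℤ) := by
      intro m
      induction m with
      | zero => simp [S_zero]
      | succ m ih2 =>
        rw [S_left_succ, ih2, ihD (m+1)]
        rcases Nat.even_or_odd m with h | h
        · have h1 : ¬ ((m+1) % 2 = 0) := by rw [Nat.even_iff] at h; omega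
          have h2 : (m+1)/2 = m/2 := by rw [Nat.even_iff] at h; omega
          simp [h1, h2]
        · have h0 : Odd m := h
          rw [Nat.odd_iff] at h
          have h1 : (m+1) % 2 = 0 := by omega
          set t := (m+1)/2 with ht
          have h2 : m/2 = t - 1 ∧ 1 ≤ t := by omega
          rw [if_pos h1]
          have key : (j+1+(t-1)).choose (j+1) + (j + t).choose t = (j+1+t).choose (j+1) := by
            have e1 : j+1+(t-1) = j + t := by omega
            rw [e1, pascal_symm j t, show j+1+t = j+t+1 from by omega, pascal j t]
            omega
          rw [h2.1]
          exact_mod_cast key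
    refine ⟨hA, ?_⟩
    intro m
    induction m with
    | zero => simp [S_zero]
    | succ m ih2 =>
      rw [S_right_succ, ih2, hA (m+1)]
      rcases Nat.even_or_odd m with h | h
      · have h0 : m % 2 = 0 := Nat.even_iff.1 h
        have h1 : ¬ ((m+1) % 2 = 0) := by omega
        have h2 : (m+1)/2 = m/2 := by omega
        rw [if_pos h0, if_neg h1, h2]
        have key : (j+1+m/2).choose (m/2) = (j+1+m/2).choose (j+1) := by
          have := pascal_symm (j+1) (m/2)
          omega
        rw [key]; ring
      · have h0 : ¬ (m % 2 = 0) := by rw [Nat.odd_iff] at h; omega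
        have h1 : (m+1) % 2 = 0 := by omega
        rw [if_neg h0, if_pos h1]
        have key : (j+1+(m+1)/2).choose ((m+1)/2) = (j+1+(m+1)/2).choose (j+1) := by
          have := pascal_symm (j+1) ((m+1)/2)
          omega
        rw [key]; ring

lemma S_A (j m : ℕ) : S (j+1) j m = ((j + m/2).choose j : ℤ) := (S_closed j).1 m

lemma S_D (j m : ℕ) :
    S (j+1) (j+1) m = if m % 2 = 0 then ((j + m/2).choose (m/2) : ℤ) else 0 :=
  (S_closed j).2 m

lemma S_Ap (j m : ℕ) :
    S (j+1) (j+2) m = (-1:ℤ)^m * ((j+1+m/2).choose (j+1) : ℤ) := by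
  induction m with
  | zero => simp [S_zero]
  | succ m ih =>
    rw [S_right_succ, ih, S_D j (m+1)]
    rcases Nat.even_or_odd m with h | h
    · have h0 : m % 2 = 0 := Nat.even_iff.1 h
      have h1 : ¬ ((m+1) % 2 = 0) := by omega
      have h2 : (m+1)/2 = m/2 := by omega
      rw [if_neg h1, h2, pow_succ]
      ring
    · have h0 : ¬ (m % 2 = 0) := by rw [Nat.odd_iff] at h; omega
      have h1 : (m+1) % 2 = 0 := by omega
      rw [if_pos h1, pow_succ]
      set t := (m+1)/2 with ht
      have h2 : m/2 = t - 1 ∧ 1 ≤ t := by omega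
      rw [h2.1]
      have hm : (-1:ℤ)^m = -1 := by
        rw [Nat.odd_iff] at h
        exact Odd.neg_one_pow (Nat.odd_iff.2 h)
      rw [hm]
      have key : (j+t).choose t + (j+1+(t-1)).choose (j+1) = (j+1+t).choose (j+1) := by
        have e1 : j+1+(t-1) = j + t := by omega
        rw [e1, pascal_symm j t, show j+1+t = j+t+1 from by omega, pascal j t]
      push_cast [← key]
      ring
    
lemma S_B (j m : ℕ) :
    S (j+2) j m = if m % 2 = 0 then ((j + m/2).choose j : ℤ) + 2*((j + m/2).choose (j+1) : ℤ)
      else 2*(((j + m/2 + 1).choose (j+1) : ℤ)) := by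
  induction m with
  | zero => simp [S_zero]
  | succ m ih =>
    rw [S_left_succ, ih, S_A j (m+1)]
    rcases Nat.even_or_odd m with h | h
    · have h0 : m % 2 = 0 := Nat.even_iff.1 h
      have h1 : ¬ ((m+1) % 2 = 0) := by omega
      have h2 : (m+1)/2 = m/2 := by omega
      rw [if_pos h0, if_neg h1, h2]
      have key : ((j + m/2).choose j) + ((j + m/2).choose (j+1)) = (j + m/2 + 1).choose (j+1) := by
        have := pascal j (m/2); omega
      push_cast [← key]
      ring
    · have h0 : ¬ (m % 2 = 0) := by rw [Nat.odd_iff] at h; omega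
      have h1 : (m+1) % 2 = 0 := by omega
      have h2 : (m+1)/2 = m/2 + 1 := by omega
      rw [if_neg h0, if_pos h1, h2]
      have e : j + (m/2+1) = j + m/2 + 1 := by omega
      rw [e]
      push_cast
      ring

/-- number of `-1` entries -/
def cnt {N : ℕ} (ε : Fin N → ℤ) : ℕ := ∑ l, if ε l = -1 then 1 else 0

lemma cnt_le {N : ℕ} (ε : Fin N → ℤ) : cnt ε ≤ N := by
  have : cnt ε ≤ ∑ _l : Fin N, 1 :=
    Finset.sum_le_sum (fun l _ => by split <;> omega)
  simpa using this

lemma sum_adt_succ {M : Type*} [AddCommMonoid M] (N m : ℕ) (f : (Fin (N+1) → ℕ) → M) :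
    ∑ v ∈ Finset.Nat.antidiagonalTuple (N+1) m, f v
      = ∑ p ∈ Finset.HasAntidiagonal.antidiagonal m, ∑ w ∈ Finset.Nat.antidiagonalTuple N p.2,
          f (Fin.cons p.1 w) := by
  rw [← Finset.sum_sigma ((Finset.HasAntidiagonal.antidiagonal m))
      (fun p => Finset.Nat.antidiagonalTuple N p.2) (fun q => f (Fin.cons q.1.1 q.2))]
  refine (Finset.sum_nbij' (fun v => (⟨(v 0, m - v 0), Fin.tail v⟩ :
      Σ _p : ℕ × ℕ, (Fin N → ℕ))) (fun q => Fin.cons q.1.1 q.2) ?_ ?_ ?_ ?_ ?_).symm.symm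
  · intro v hv
    rw [Finset.Nat.mem_antidiagonalTuple] at hv
    have h0 : v 0 + ∑ l : Fin N, Fin.tail v l = m := by
      rw [← hv, Fin.sum_univ_succ]; rfl
    simp only [Finset.mem_sigma, Finset.HasAntidiagonal.mem_antidiagonal,
      Finset.Nat.mem_antidiagonalTuple]
    constructor
    · omega
    · omega
  · rintro ⟨⟨x, y⟩, w⟩ hq
    simp only [Finset.mem_sigma, Finset.HasAntidiagonal.mem_antidiagonal,
      Finset.Nat.mem_antidiagonalTuple] at hq
    rw [Finset.Nat.mem_antidiagonalTuple, Fin.sum_univ_succ]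
    simp only [Fin.cons_zero, Fin.cons_succ]
    omega
  · intro v hv
    exact Fin.cons_self_tail v
  · rintro ⟨⟨x, y⟩, w⟩ hq
    simp only [Finset.mem_sigma, Finset.HasAntidiagonal.mem_antidiagonal,
      Finset.Nat.mem_antidiagonalTuple] at hq
    simp only [Fin.cons_zero, Fin.tail_cons]
    have : m - x = y := by omega
    rw [this]
  · intro v hv
    rw [Fin.cons_self_tail]

lemma cnt_succ {N : ℕ} (ε : Fin (N+1) → ℤ) :
    cnt ε = (if ε 0 = -1 then 1 else 0) + cnt (Fin.tail ε) := by
  unfold cnt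
  rw [Fin.sum_univ_succ]
  rfl

lemma sum_prod_eq_S : ∀ (N : ℕ) (ε : Fin N → ℤ), (∀ l, ε l = 1 ∨ ε l = -1) → ∀ m,
    (∑ v ∈ Finset.Nat.antidiagonalTuple N m, ∏ l, ε l ^ v l)
      = S (N - cnt ε) (cnt ε) m := by
  intro N
  induction N with
  | zero =>
    intro ε hε m
    have hc : cnt ε = 0 := by simp [cnt]
    rw [hc, S_zero_zero]
    cases m with
    | zero => simp [Finset.Nat.antidiagonalTuple_zero_zero]
    | succ m => simp [Finset.Nat.antidiagonalTuple_zero_succ]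
  | succ N ih =>
    intro ε hε m
    have hc := cnt_succ ε
    have hcl := cnt_le (Fin.tail ε)
    have htail : ∀ l, Fin.tail ε l = 1 ∨ Fin.tail ε l = -1 := fun l => hε l.succ
    rw [sum_adt_succ]
    have hterm : ∀ p : ℕ × ℕ,
        (∑ w ∈ Finset.Nat.antidiagonalTuple N p.2, ∏ l, ε l ^ (Fin.cons p.1 w) l)
        = ε 0 ^ p.1 * S (N - cnt (Fin.tail ε)) (cnt (Fin.tail ε)) p.2 := by
      intro p
      rw [← ih (Fin.tail ε) htail p.2, Finset.mul_sum]
      refine Finset.sum_congr rfl fun w _ => ?_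
      rw [Fin.prod_univ_succ]
      simp only [Fin.cons_zero, Fin.cons_succ]
      rfl
    rw [Finset.sum_congr rfl fun p _ => hterm p]
    rw [Finset.Nat.sum_antidiagonal_eq_sum_range_succ_mk]
    set b := cnt (Fin.tail ε) with hb
    rcases hε 0 with h0 | h0
    · rw [h0] at hc ⊢
      have hc2 : cnt ε = b := by rw [hc]; norm_num
      rw [hc2, show N + 1 - b = (N - b) + 1 from by omega, S_left]
      have := Finset.sum_range_reflect (fun y => S (N - b) b y) (m+1)
      rw [← this]
      refine Finset.sum_congr rfl fun k hk => ?_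
      simp only [Finset.mem_range] at hk
      rw [one_pow, one_mul]
      congr 1
      try omega
    · rw [h0] at hc ⊢
      have hc2 : cnt ε = b + 1 := by rw [hc]; norm_num; omega
      rw [hc2, show N + 1 - (b+1) = N - b from by omega, S_right]
      have := Finset.sum_range_reflect (fun y => (-1:ℤ)^(m-y) * S (N - b) b y) (m+1)
      rw [← this]
      refine Finset.sum_congr rfl fun k hk => ?_
      simp only [Finset.mem_range] at hk
      have e1 : m - (m + 1 - 1 - k) = k := by omega
      have e2 : m + 1 - 1 - k = m - k := by omega
      rw [e1, e2]

lemma count_parity (N p : ℕ) (hp : p < 2) :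
    (∑ l ∈ Finset.range N, if l % 2 = p then 1 else 0) = (N + 1 - p)/2 := by
  induction N with
  | zero => simp; omega
  | succ N ih =>
    rw [Finset.sum_range_succ, ih]
    by_cases h : N % 2 = p <;> simp [h] <;> omega

lemma cnt_eq (n i p : ℕ) (hp : p < 2) (hi : i ≤ n) :
    (∑ l ∈ Finset.range (n+1), if ¬((l % 2 = p ∧ l < n) ↔ l < i) then 1 else 0)
      = (i + p)/2 + ((n + 1 - p)/2 - (i + 1 - p)/2) := by
  have hsplit : ∀ l : ℕ, (if ¬((l % 2 = p ∧ l < n) ↔ l < i) then (1:ℕ) else 0)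
      = (if (l % 2 = p ∧ l < n) ∧ ¬(l < i) then 1 else 0)
        + (if ¬(l % 2 = p ∧ l < n) ∧ l < i then 1 else 0) := by
    intro l
    by_cases h1 : l % 2 = p ∧ l < n <;> by_cases h2 : l < i <;> simp [h1, h2]
  rw [Finset.sum_congr rfl fun l _ => hsplit l, Finset.sum_add_distrib]
  have h1 : (∑ l ∈ Finset.range (n+1), if (l % 2 = p ∧ l < n) ∧ ¬(l < i) then 1 else 0)
      = (n + 1 - p)/2 - (i + 1 - p)/2 := by
    rw [Finset.range_eq_Ico, ← Finset.sum_Ico_consecutive _ (Nat.zero_le i) (by omega : i ≤ n+1)]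
    have e1 : (∑ l ∈ Finset.Ico 0 i, if (l % 2 = p ∧ l < n) ∧ ¬(l < i) then 1 else 0) = 0 := by
      apply Finset.sum_eq_zero
      intro l hl
      rw [Finset.mem_Ico] at hl
      simp [hl.2]
    rw [e1, zero_add, Finset.sum_Ico_succ_top (by omega : i ≤ n)]
    have e2 : (if (n % 2 = p ∧ n < n) ∧ ¬(n < i) then 1 else 0) = 0 := by simp
    rw [e2, add_zero]
    have e3 : (∑ l ∈ Finset.Ico i n, if (l % 2 = p ∧ l < n) ∧ ¬(l < i) then 1 else 0)
        = ∑ l ∈ Finset.Ico i n, if l % 2 = p then 1 else 0 := by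
      apply Finset.sum_congr rfl
      intro l hl
      rw [Finset.mem_Ico] at hl
      have h2 : ¬ (l < i) := by omega
      by_cases h : l % 2 = p <;> simp [h, h2, hl.2]
    rw [e3]
    have e4 : ((∑ l ∈ Finset.Ico 0 i, if l % 2 = p then 1 else 0)
        + ∑ l ∈ Finset.Ico i n, if l % 2 = p then 1 else 0)
        = ∑ l ∈ Finset.Ico 0 n, if l % 2 = p then 1 else 0 :=
      Finset.sum_Ico_consecutive _ (Nat.zero_le i) (by omega : i ≤ n)
    have c1 := count_parity i p hp
    have c2 := count_parity n p hp
    rw [Finset.range_eq_Ico] at c1 c2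
    omega
  have h2 : (∑ l ∈ Finset.range (n+1), if ¬(l % 2 = p ∧ l < n) ∧ l < i then 1 else 0)
      = (i + p)/2 := by
    rw [Finset.range_eq_Ico, ← Finset.sum_Ico_consecutive _ (Nat.zero_le i) (by omega : i ≤ n+1)]
    have e1 : (∑ l ∈ Finset.Ico i (n+1), if ¬(l % 2 = p ∧ l < n) ∧ l < i then 1 else 0) = 0 := by
      apply Finset.sum_eq_zero
      intro l hl
      rw [Finset.mem_Ico] at hl
      have : ¬ (l < i) := by omega
      simp [this]
    rw [e1, add_zero]
    have e2 : (∑ l ∈ Finset.Ico 0 i, if ¬(l % 2 = p ∧ l < n) ∧ l < i then 1 else 0)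
        = ∑ l ∈ Finset.Ico 0 i, if l % 2 = (1 - p) then 1 else 0 := by
      apply Finset.sum_congr rfl
      intro l hl
      rw [Finset.mem_Ico] at hl
      have hln : l < n := by omega
      have hne : ¬ ((1:ℕ) - p = p) := by omega
      by_cases h : l % 2 = p
      · have hne2 : ¬ (p = 1 - p) := by omega
        simp [h, hln, hl.2, hne2]
      · have : l % 2 = 1 - p := by omega
        simp [this, hl.2, hne]
    rw [e2]
    have c1 := count_parity i (1-p) (by omega)
    rw [Finset.range_eq_Ico] at c1
    rw [c1]
    omega
  rw [h1, h2]
  omega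

/-- the sign vector attached to `(n, i)` -/
def E (n i : ℕ) (l : Fin (n+1)) : ℤ :=
  (if ((l:ℕ) % 2 = (n+1) % 2 ∧ (l:ℕ) < n) then -1 else 1) *
    (if (l:ℕ) < i then -1 else 1)

lemma E_pm (n i : ℕ) (l : Fin (n+1)) : E n i l = 1 ∨ E n i l = -1 := by
  unfold E
  split <;> split <;> norm_num

lemma eps_eq (n : ℕ) (v : Fin (n+1) → ℕ) :
    eps n v = ∑ l : Fin (n+1), if ((l:ℕ) % 2 = (n+1) % 2 ∧ (l:ℕ) < n) then v l else 0 := by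
  unfold eps
  rw [← Finset.sum_filter]
  refine Finset.sum_nbij' (fun t => (⟨n - 1 - 2*t, by omega⟩ : Fin (n+1)))
    (fun l => (n - 1 - (l:ℕ))/2) ?_ ?_ ?_ ?_ ?_
  · intro t ht
    simp only [Finset.mem_range] at ht
    simp only [Finset.mem_filter, Finset.mem_univ, true_and]
    constructor <;> omega
  · intro l hl
    simp only [Finset.mem_filter, Finset.mem_univ, true_and] at hl
    simp only [Finset.mem_range]
    omega
  · intro t ht
    simp only [Finset.mem_range] at ht
    dsimp only
    omega
  · intro l hl
    simp only [Finset.mem_filter, Finset.mem_univ, true_and] at hl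
    apply Fin.ext
    simp only []
    omega
  · intro t ht
    rfl

lemma sign_prod (n i : ℕ) (v : Fin (n+1) → ℕ) :
    (-1:ℤ)^(eps n v) * (-1:ℤ)^(psumV n v i) = ∏ l : Fin (n+1), (E n i l)^(v l) := by
  rw [eps_eq, psumV]
  rw [← Finset.prod_pow_eq_pow_sum, ← Finset.prod_pow_eq_pow_sum, ← Finset.prod_mul_distrib]
  refine Finset.prod_congr rfl fun l _ => ?_
  unfold E
  by_cases h1 : ((l:ℕ) % 2 = (n+1) % 2 ∧ (l:ℕ) < n) <;>
    by_cases h2 : ((l:ℕ) < i) <;> simp [h1, h2, ← mul_pow]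

lemma cnt_E (n i : ℕ) (hi : i ≤ n) :
    cnt (E n i) = (i + (n+1) % 2)/2
      + ((n + 1 - (n+1) % 2)/2 - (i + 1 - (n+1) % 2)/2) := by
  unfold cnt
  have hpt : ∀ l : Fin (n+1), (if E n i l = -1 then (1:ℕ) else 0)
      = (fun x : ℕ => if ¬((x % 2 = (n+1) % 2 ∧ x < n) ↔ x < i) then 1 else 0) (l:ℕ) := by
    intro l
    unfold E
    by_cases h1 : ((l:ℕ) % 2 = (n+1) % 2 ∧ (l:ℕ) < n) <;>
      by_cases h2 : ((l:ℕ) < i) <;> simp [h1, h2] <;> norm_num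
  rw [Finset.sum_congr rfl fun l _ => hpt l]
  rw [Fin.sum_univ_eq_sum_range (fun x => if ¬((x % 2 = (n+1) % 2 ∧ x < n) ↔ x < i) then 1 else 0) (n+1)]
  exact cnt_eq n i ((n+1) % 2) (by omega) hi

lemma X1_eq_S (n m : ℕ) :
    X1 n m = ∑ i ∈ Finset.range (n+1), S (n+1 - cnt (E n i)) (cnt (E n i)) m := by
  unfold X1
  have h0 : ∀ v : Fin (n+1) → ℕ, psumV n v 0 = 0 := by
    intro v; unfold psumV; simp
  have hins : Finset.range (n+1) = insert 0 (Finset.Icc 1 n) := by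
    ext x; simp; omega
  have hstep : ∀ v : Fin (n+1) → ℕ,
      (-1 : ℤ) ^ eps n v * (1 + ∑ i ∈ Finset.Icc 1 n, (-1 : ℤ) ^ psumV n v i)
      = ∑ i ∈ Finset.range (n+1), ∏ l : Fin (n+1), (E n i l)^(v l) := by
    intro v
    rw [hins, Finset.sum_insert (by simp)]
    rw [Finset.sum_congr rfl fun i _ => (sign_prod n i v).symm]
    rw [← sign_prod n 0 v, h0 v, pow_zero, mul_one]
    rw [mul_add, mul_one, Finset.mul_sum]
  rw [Finset.sum_congr rfl fun v _ => hstep v, Finset.sum_comm]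
  exact Finset.sum_congr rfl fun i _ => sum_prod_eq_S (n+1) (E n i) (E_pm n i) m

lemma sum_range_even_odd (f : ℕ → ℤ) (N : ℕ) :
    ∑ i ∈ Finset.range (2*N), f i
      = (∑ r ∈ Finset.range N, f (2*r)) + ∑ r ∈ Finset.range N, f (2*r+1) := by
  induction N with
  | zero => simp
  | succ N ih =>
    rw [show 2*(N+1) = 2*N+1+1 from by ring, Finset.sum_range_succ, Finset.sum_range_succ,
      ih, Finset.sum_range_succ, Finset.sum_range_succ]
    ring_nf

lemma sum_range_even_odd' (f : ℕ → ℤ) (N : ℕ) :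
    ∑ i ∈ Finset.range (2*N+1), f i
      = (∑ r ∈ Finset.range (N+1), f (2*r)) + ∑ r ∈ Finset.range N, f (2*r+1) := by
  rw [Finset.sum_range_succ, sum_range_even_odd, Finset.sum_range_succ]
  ring

lemma X1_even (j m : ℕ) (hj : 1 ≤ j) :
    X1 (2*j) m = (j+1) * S (j+1) j m + j * S j (j+1) m := by
  rw [X1_eq_S]
  rw [sum_range_even_odd' (fun i => S (2*j+1 - cnt (E (2*j) i)) (cnt (E (2*j) i)) m) j]
  have hc1 : ∀ r, r ≤ j → cnt (E (2*j) (2*r)) = j := by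
    intro r hr
    rw [cnt_E _ _ (by omega)]
    omega
  have hc2 : ∀ r, r < j → cnt (E (2*j) (2*r+1)) = j + 1 := by
    intro r hr
    rw [cnt_E _ _ (by omega)]
    omega
  have h1 : ∀ r ∈ Finset.range (j+1),
      S (2*j+1 - cnt (E (2*j) (2*r))) (cnt (E (2*j) (2*r))) m = S (j+1) j m := by
    intro r hr
    rw [Finset.mem_range] at hr
    rw [hc1 r (by omega), show 2*j+1-j = j+1 from by omega]
  have h2 : ∀ r ∈ Finset.range j,
      S (2*j+1 - cnt (E (2*j) (2*r+1))) (cnt (E (2*j) (2*r+1))) m = S j (j+1) m := by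
    intro r hr
    rw [Finset.mem_range] at hr
    rw [hc2 r (by omega), show 2*j+1-(j+1) = j from by omega]
  rw [Finset.sum_congr rfl h1, Finset.sum_congr rfl h2, Finset.sum_const, Finset.sum_const]
  simp only [Finset.card_range, nsmul_eq_mul]
  push_cast
  ring

lemma sum_range_even_odd2 (f : ℕ → ℤ) (N : ℕ) :
    ∑ i ∈ Finset.range (2*N+1+1), f i
      = (∑ r ∈ Finset.range (N+1), f (2*r)) + ∑ r ∈ Finset.range (N+1), f (2*r+1) := by
  rw [Finset.sum_range_succ, sum_range_even_odd', Finset.sum_range_succ (fun r => f (2*r+1)) N]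
  ring

lemma X1_odd (J m : ℕ) :
    X1 (2*J+1) m = (J+1) * S (J+1) (J+1) m + (J+1) * S (J+2) J m := by
  rw [X1_eq_S]
  rw [sum_range_even_odd2 (fun i => S (2*J+1+1 - cnt (E (2*J+1) i)) (cnt (E (2*J+1) i)) m) J]
  have hc1 : ∀ r, r ≤ J → cnt (E (2*J+1) (2*r)) = J+1 := by
    intro r hr
    rw [cnt_E _ _ (by omega)]
    omega
  have hc2 : ∀ r, r ≤ J → cnt (E (2*J+1) (2*r+1)) = J := by
    intro r hr
    rw [cnt_E _ _ (by omega)]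
    omega
  have h1 : ∀ r ∈ Finset.range (J+1),
      S (2*J+1+1 - cnt (E (2*J+1) (2*r))) (cnt (E (2*J+1) (2*r))) m = S (J+1) (J+1) m := by
    intro r hr
    rw [Finset.mem_range] at hr
    rw [hc1 r (by omega), show 2*J+1+1-(J+1) = J+1 from by omega]
  have h2 : ∀ r ∈ Finset.range (J+1),
      S (2*J+1+1 - cnt (E (2*J+1) (2*r+1))) (cnt (E (2*J+1) (2*r+1))) m = S (J+2) J m := by
    intro r hr
    rw [Finset.mem_range] at hr
    rw [hc2 r (by omega), show 2*J+1+1-J = J+2 from by omega]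
  rw [Finset.sum_congr rfl h1, Finset.sum_congr rfl h2, Finset.sum_const, Finset.sum_const]
  simp only [Finset.card_range, nsmul_eq_mul]
  push_cast
  ring

theorem stmt5 (j k : ℕ) (hj : 1 ≤ j) (hk : 1 ≤ k) :
    X1 (2*j) (2*k) = (2*j+1)*((j+k).choose j : ℤ) ∧
    X1 (2*j) (2*k-1) = ((j+k-1).choose j : ℤ) ∧
    X1 (2*j-1) (2*k) = (2*j+2*k)*((j+k-1).choose k : ℤ) ∧
    X1 (2*j-1) (2*k-1) = 2*k*((j+k-1).choose k : ℤ) := by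
  obtain ⟨J, rfl⟩ : ∃ J, j = J + 1 := ⟨j - 1, by omega⟩
  obtain ⟨K, rfl⟩ : ∃ K, k = K + 1 := ⟨k - 1, by omega⟩
  have hk2 : 2*(K+1)/2 = (K+1) := by omega
  have hk21 : (2*(K+1)-1) % 2 = 1 := by omega
  have hk2d : (2*(K+1)-1)/2 = (K+1) - 1 := by omega
  have hsymm : (J+1+(K+1)).choose (K+1) = (J+1+(K+1)).choose (J+1) := pascal_symm (J+1) (K+1)
  refine ⟨?_, ?_, ?_, ?_⟩
  · rw [X1_even (J+1) (2*(K+1)) (by omega), S_A (J+1) (2*(K+1)),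
      show (J+1:ℕ) = J+1 from rfl]
    rw [show S (J+1) (J+1+1) (2*(K+1)) = S (J+1) (J+2) (2*(K+1)) from rfl, S_Ap J (2*(K+1))]
    rw [hk2]
    have he : (-1:ℤ)^(2*(K+1)) = 1 := by
      rw [pow_mul]; norm_num
    rw [he]
    push_cast
    ring
  · rw [X1_even (J+1) (2*(K+1)-1) (by omega), S_A (J+1) (2*(K+1)-1),
      show S (J+1) (J+1+1) (2*(K+1)-1) = S (J+1) (J+2) (2*(K+1)-1) from rfl, S_Ap J (2*(K+1)-1)]
    rw [hk2d]
    have he : (-1:ℤ)^(2*(K+1)-1) = -1 := Odd.neg_one_pow ⟨(K+1)-1, by omega⟩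
    rw [he]
    have e1 : J + 1 + ((K+1)-1) = J + (K+1) := by omega
    have e2 : J + 1 + (K+1) - 1 = J + (K+1) := by omega
    rw [e1, e2]
    push_cast
    ring
  · rw [show 2*(J+1)-1 = 2*J+1 from by omega, X1_odd J (2*(K+1)), S_D J (2*(K+1)), S_B J (2*(K+1)),
      if_pos (by omega : 2*(K+1) % 2 = 0), if_pos (by omega : 2*(K+1) % 2 = 0), hk2]
    have e2 : J + 1 + (K+1) - 1 = J + (K+1) := by omega
    rw [e2]
    have hs : (J+(K+1)).choose J = (J+(K+1)).choose (K+1) := (pascal_symm J (K+1)).symm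
    have hid := Nat.choose_succ_right_eq (J+(K+1)) J
    rw [Nat.add_sub_cancel_left] at hid
    rw [hs] at hid ⊢
    have hidz : ((J+(K+1)).choose (J+1) : ℤ) * (J+1) = ((J+(K+1)).choose (K+1) : ℤ) * (K+1) := by
      exact_mod_cast congrArg (Nat.cast : ℕ → ℤ) hid
    push_cast
    linear_combination 2 * hidz
  · rw [show 2*(J+1)-1 = 2*J+1 from by omega, X1_odd J (2*(K+1)-1), S_D J (2*(K+1)-1), S_B J (2*(K+1)-1),
      if_neg (by omega : ¬ ((2*(K+1)-1) % 2 = 0)), if_neg (by omega : ¬ ((2*(K+1)-1) % 2 = 0)), hk2d]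
    have e1 : J + ((K+1)-1) + 1 = J + (K+1) := by omega
    have e2 : J + 1 + (K+1) - 1 = J + (K+1) := by omega
    rw [e1, e2]
    have hid := Nat.choose_succ_right_eq (J+(K+1)) J
    rw [Nat.add_sub_cancel_left] at hid
    rw [(pascal_symm J (K+1)).symm] at hid
    have hidz : ((J+(K+1)).choose (J+1) : ℤ) * (J+1) = ((J+(K+1)).choose (K+1) : ℤ) * (K+1) := by
      exact_mod_cast congrArg (Nat.cast : ℕ → ℤ) hid
    push_cast
    linear_combination 2 * hidz
end

section
/- Let k ≥ 1, r ≥ 1 and 1 ≤ s ≤ k be integers. Then Σ_{q=2s−1}^{2k−1} F(k,r,s,q) = [−3·(2k)!·(2r+3)! / ((r−1)!·(2k+2r+2)!)] · [(k+1−s)·(r−1+s)!/s!], an identity of rational numbers. -/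
open Finset

/-- The hypergeometric summand
`F(k,r,s,q) = [6(2k+2r−q+2)!·q!·(r+s−1)!·(2k−2s)!·(k−s+1)
  / ((2k+2r+2)!·(2k−q+2)!·(q−2s+1)!·s!·(r−1)!)]
  · [(q−2s+1)(2r+2s+1) − 2s(2k−2s+3)]`. -/
def Ffun (k r s q : ℕ) : ℚ :=
  ((6 * (2*k+2*r+2-q).factorial * q.factorial * (r-1+s).factorial
      * (2*k-2*s).factorial * (k+1-s) : ℕ) : ℚ)
  / (((2*k+2*r+2).factorial * (2*k+2-q).factorial * (q+1-2*s).factorial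
      * s.factorial * (r-1).factorial : ℕ) : ℚ)
  * ((((q+1-2*s) * (2*r+2*s+1) : ℕ) : ℚ) - ((2*s*(2*k+3-2*s) : ℕ) : ℚ))

/-- The Gosper antidifference. -/
def Gfun (k r s i : ℕ) : ℚ :=
  6 * i * ((i:ℚ) + 2*s - 2*k - 2*r - 4)
  * (((2*k+2*r+3-2*s-i).factorial * (2*s-1+i).factorial * (r-1+s).factorial
      * (2*k-2*s).factorial * (k+1-s) : ℕ) : ℚ)
  / (((2*k+2*r+2).factorial * (2*k+3-2*s-i).factorial * i.factorial
      * s.factorial * (r-1).factorial : ℕ) : ℚ)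

set_option maxHeartbeats 2000000 in
lemma key (k r s i : ℕ) (hr : 1 ≤ r) (hs : 1 ≤ s) (hsk : s ≤ k)
    (hi : i ≤ 2*k - 2*s) :
    Ffun k r s (2*s-1+i) = Gfun k r s (i+1) - Gfun k r s i := by
  obtain ⟨A, hA⟩ : ∃ A, 2*k = 2*s + i + A := ⟨2*k-2*s-i, by omega⟩
  obtain ⟨s', rfl⟩ : ∃ s', s = s'+1 := ⟨s-1, by omega⟩
  unfold Ffun Gfun
  have n1 : (A+2*r+3).factorial = (A+2*r+3) * (A+2*r+2).factorial := by
    rw [show A+2*r+3 = (A+2*r+2)+1 by ring]; exact Nat.factorial_succ _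
  have n2 : (A+3).factorial = (A+3)*(A+2).factorial := by
    rw [show A+3 = (A+2)+1 by ring]; exact Nat.factorial_succ _
  have n3 : (2*s'+1+(i+1)).factorial = (2*s'+2+i) * (2*s'+1+i).factorial := by
    rw [show 2*s'+1+(i+1) = (2*s'+1+i)+1 by ring]
    rw [Nat.factorial_succ]; ring_nf
  have n4 : (i+1).factorial = (i+1) * i.factorial := Nat.factorial_succ _
  rw [show 2*k+2*r+2-(2*(s'+1)-1+i) = A+2*r+3 by omega,
      show 2*k+2-(2*(s'+1)-1+i) = A+3 by omega,
      show (2*(s'+1)-1+i)+1-2*(s'+1) = i by omega,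
      show 2*k+2*r+3-2*(s'+1)-i = A+2*r+3 by omega,
      show 2*k+3-2*(s'+1)-i = A+3 by omega,
      show 2*k+2*r+3-2*(s'+1)-(i+1) = A+2*r+2 by omega,
      show 2*k+3-2*(s'+1)-(i+1) = A+2 by omega,
      show 2*k-2*(s'+1) = A+i by omega,
      show 2*k+3-2*(s'+1) = A+i+3 by omega,
      show 2*(s'+1)-1+i = 2*s'+1+i by omega,
      show 2*(s'+1)-1+(i+1) = 2*s'+1+(i+1) by omega,
      n1, n2, n3, n4]
  have h2 : (((A+2).factorial : ℕ) : ℚ) ≠ 0 := by exact_mod_cast (A+2).factorial_ne_zero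
  have h3 : (((2*k+2*r+2).factorial : ℕ) : ℚ) ≠ 0 := by
    exact_mod_cast (2*k+2*r+2).factorial_ne_zero
  have h4 : ((i.factorial : ℕ) : ℚ) ≠ 0 := by exact_mod_cast i.factorial_ne_zero
  have h5 : (((s'+1).factorial : ℕ) : ℚ) ≠ 0 := by exact_mod_cast (s'+1).factorial_ne_zero
  have h6 : (((r-1).factorial : ℕ) : ℚ) ≠ 0 := by exact_mod_cast (r-1).factorial_ne_zero
  have h7 : ((A:ℚ)+3) ≠ 0 := by positivity
  have hAi : (A:ℚ) + (i:ℚ) = 2*(k:ℚ) - 2*((s':ℚ)+1) := by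
    have : (2*k : ℚ) = 2*((s':ℚ)+1) + i + A := by exact_mod_cast hA
    linarith
  push_cast
  rw [show ((i:ℚ)+1) + 2*((s':ℚ)+1) - 2*k - 2*r - 4 = -((A:ℚ)+2*r+3) by linarith,
      show (i:ℚ) + 2*((s':ℚ)+1) - 2*k - 2*r - 4 = -((A:ℚ)+2*r+4) by linarith]
  field_simp
  ring

theorem stmt10 (k r s : ℕ) (hk : 1 ≤ k) (hr : 1 ≤ r) (hs1 : 1 ≤ s) (hsk : s ≤ k) :
    ∑ q ∈ Finset.Icc (2*s-1) (2*k-1), Ffun k r s q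
      = (-3 * ((2*k).factorial : ℚ) * ((2*r+3).factorial : ℚ)
          / (((r-1).factorial : ℚ) * ((2*k+2*r+2).factorial : ℚ)))
        * (((k+1-s : ℕ) : ℚ) * ((r-1+s).factorial : ℚ) / (s.factorial : ℚ)) := by
  have hG0 : Gfun k r s 0 = 0 := by simp [Gfun]
  rw [← Finset.Ico_add_one_right_eq_Icc, show 2*k-1+1 = 2*k by omega, Finset.sum_Ico_eq_sum_range,
      show 2*k-(2*s-1) = 2*k-2*s+1 by omega]
  rw [Finset.sum_congr rfl (fun i hi => key k r s i hr hs1 hsk (by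
        have := Finset.mem_range.mp hi; omega))]
  rw [Finset.sum_range_sub (Gfun k r s), hG0, sub_zero]
  unfold Gfun
  have n5 : (2*r+3).factorial = (2*r+3)*(2*r+2).factorial := by
    rw [show 2*r+3 = (2*r+2)+1 by ring]; exact Nat.factorial_succ _
  have n6 : (2*k-2*s+1).factorial = (2*k-2*s+1)*(2*k-2*s).factorial := Nat.factorial_succ _
  rw [show 2*k+2*r+3-2*s-(2*k-2*s+1) = 2*r+2 by omega,
      show 2*k+3-2*s-(2*k-2*s+1) = 2 by omega,
      show 2*s-1+(2*k-2*s+1) = 2*k by omega, n6, n5]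
  have hcast : ((2*k-2*s : ℕ):ℚ) = 2*(k:ℚ) - 2*(s:ℚ) := by
    have h : 2*s ≤ 2*k := by omega
    push_cast [Nat.cast_sub h]; ring
  have h3 : (((2*k+2*r+2).factorial : ℕ) : ℚ) ≠ 0 := by
    exact_mod_cast (2*k+2*r+2).factorial_ne_zero
  have h5 : ((s.factorial : ℕ) : ℚ) ≠ 0 := by exact_mod_cast s.factorial_ne_zero
  have h6 : (((r-1).factorial : ℕ) : ℚ) ≠ 0 := by exact_mod_cast (r-1).factorial_ne_zero
  have h9 : ((2*k-2*s : ℕ):ℚ) + 1 ≠ 0 := by positivity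
  have h9' : 2*(k:ℚ) - 2*(s:ℚ) + 1 ≠ 0 := by
    have hks : (s:ℚ) ≤ (k:ℚ) := by exact_mod_cast hsk
    intro h; linarith
  push_cast [hcast]
  rw [show 2*(k:ℚ)-2*s+1 + 2*(s:ℚ) - 2*k - 2*r - 4 = -(2*(r:ℚ)+3) by ring]
  field_simp
  have h9'' : (1 + (k:ℚ)*2 - (s:ℚ)*2) ≠ 0 := by intro h; apply h9'; linarith
  ring_nf
  linear_combination (-6 * ((1 + k - s : ℕ) : ℚ)) * inv_mul_cancel₀ h9''
end
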